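/- For j \geq 1 and x,y > 0, the double Laplace transform of the harmonic polynomial f_{2j,j}(u,v) = \sum_{k=0}^{j-1} (-1)^k C(2j,2k+1) v^{2k+1} u^{2j-2k-1} equals (2j)! * ((1/x^2)^j - (-1/y^2)^j) / (x^2 + y^2). -/

import Mathlib

open MeasureTheory Set


lemma aux_integrable (n : ℕ) {c : ℝ} (hc : 0 < c) :
    IntegrableOn (fun t : ℝ => t ^ n * Real.exp (-(c * t))) (Set.Ioi 0) := by
  have := integrableOn_rpow_mul_exp_neg_mul_rpow (p := 1) (s := n) (b := c)
    (by exact neg_one_lt_zero.trans_le (Nat.cast_nonneg n)) zero_lt_one hc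
  refine this.congr_fun (fun t ht => ?_) measurableSet_Ioi
  beta_reduce
  rw [Real.rpow_one, Real.rpow_natCast, neg_mul]

lemma aux_integral (n : ℕ) {c : ℝ} (hc : 0 < c) :
    ∫ t in Set.Ioi (0:ℝ), t ^ n * Real.exp (-(c * t)) = n.factorial / c ^ (n + 1) := by
  have h := Real.integral_rpow_mul_exp_neg_mul_Ioi (a := (n : ℝ) + 1) (r := c)
    (by positivity) hc
  rw [show ((n : ℝ) + 1 - 1) = (n : ℝ) by ring] at h
  have h2 : ∫ t in Set.Ioi (0:ℝ), t ^ n * Real.exp (-(c * t))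
      = ∫ t in Set.Ioi (0:ℝ), t ^ ((n : ℝ)) * Real.exp (-(c * t)) := by
    refine setIntegral_congr_fun measurableSet_Ioi (fun t ht => ?_)
    rw [Real.rpow_natCast]
  rw [h2, h, Real.Gamma_nat_eq_factorial,
    show ((n:ℝ)+1) = ((n+1 : ℕ):ℝ) by push_cast; ring, Real.rpow_natCast]
  field_simp
  rw [← mul_pow, one_div_mul_cancel hc.ne', one_pow]


lemma aux_sum (j : ℕ) (hj : 1 ≤ j) {x y : ℝ} (hx : 0 < x) (hy : 0 < y) :
    ∑ k ∈ Finset.range j, (-1:ℝ)^k * ((2*j).choose (2*k+1) : ℝ) *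
        ((2*k+1).factorial / y ^ (2*k+1+1)) * ((2*j-(2*k+1)).factorial / x ^ (2*j-(2*k+1)+1))
      = ((2*j).factorial : ℝ) * ((1/x^2)^j - (-(1/y^2))^j) / (x^2+y^2) := by
  have hx2 : (x:ℝ)^2 ≠ 0 := by positivity
  have hy2 : (y:ℝ)^2 ≠ 0 := by positivity
  set a : ℝ := 1/x^2 with ha
  set b : ℝ := -(1/y^2) with hb
  have hstep : ∀ k ∈ Finset.range j,
      (-1:ℝ)^k * ((2*j).choose (2*k+1) : ℝ) *
        ((2*k+1).factorial / y ^ (2*k+1+1)) * ((2*j-(2*k+1)).factorial / x ^ (2*j-(2*k+1)+1))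
      = ((2*j).factorial : ℝ) * (-(a*b)) * (b^k * a^(j-1-k)) := by
    intro k hk
    rw [Finset.mem_range] at hk
    have h1 : 2*k+1 ≤ 2*j := by omega
    have hC : ((2*j).choose (2*k+1) : ℝ) * (2*k+1).factorial * (2*j-(2*k+1)).factorial
        = (2*j).factorial := by
      exact_mod_cast congrArg Nat.cast (Nat.choose_mul_factorial_mul_factorial h1)
    have e1 : 2*j-(2*k+1)+1 = 2*(j-1-k)+2 := by omega
    have e2 : 2*k+1+1 = 2*k+2 := by omega
    rw [e1, e2, ha, hb]
    have hxpow : x ^ (2*(j-1-k)+2) = (x^2)^(j-1-k) * x^2 := by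
      rw [pow_add, pow_mul]
    have hypow : y ^ (2*k+2) = (y^2)^k * y^2 := by
      rw [pow_add, pow_mul]
    rw [hxpow, hypow]
    have hxk : ((x:ℝ)^2)^(j-1-k) ≠ 0 := by positivity
    have hyk : ((y:ℝ)^2)^k ≠ 0 := by positivity
    field_simp
    have hy' : (y^2)^k * (-(1/y^2))^k = (-1:ℝ)^k := by rw [← mul_pow, mul_neg, mul_one_div_cancel hy2]
    have hx' : (x^2)^(j-1-k) * (1/x^2)^(j-1-k) = (1:ℝ) := by rw [← mul_pow, mul_one_div_cancel hx2, one_pow]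
    linear_combination (-1:ℝ)^k * hC - ((2*j).factorial : ℝ) * ((x^2)^(j-1-k) * (1/x^2)^(j-1-k)) * hy' - ((2*j).factorial : ℝ) * (-1:ℝ)^k * hx'
  rw [Finset.sum_congr rfl hstep, ← Finset.mul_sum]
  have hgs := geom_sum₂_mul b a j
  have hba : b - a ≠ 0 := by
    rw [ha, hb]
    have h1 : (0:ℝ) < 1/x^2 + 1/y^2 := by positivity
    intro h
    nlinarith
  have hxy : (x:ℝ)^2 + y^2 ≠ 0 := by positivity
  have hkey : -(a*b) * (x^2+y^2) = a - b := by rw [ha, hb]; field_simp; ring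
  rw [eq_comm, div_eq_iff hxy]
  linear_combination ((2*j).factorial : ℝ) * hgs - (((2*j).factorial : ℝ) * (∑ i ∈ Finset.range j, b ^ i * a ^ (j - 1 - i))) * hkey


/-- Double Laplace transform of the harmonic polynomial `f_{2j,j}`. -/
theorem laplace_transform_f2jj (j : ℕ) (hj : 1 ≤ j) (x y : ℝ) (hx : 0 < x) (hy : 0 < y) :
    (∫ u in Set.Ioi (0 : ℝ), ∫ v in Set.Ioi (0 : ℝ),
        (∑ k ∈ Finset.range j,
            (-1 : ℝ) ^ k * ((2 * j).choose (2 * k + 1) : ℝ) *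
              v ^ (2 * k + 1) * u ^ (2 * j - (2 * k + 1)))
          * Real.exp (-(x * u + y * v)))
      = ((2 * j).factorial : ℝ) * ((1 / x ^ 2) ^ j - (-(1 / y ^ 2)) ^ j) / (x ^ 2 + y ^ 2) := by
  have inner : ∀ u : ℝ, (∫ v in Set.Ioi (0:ℝ),
      (∑ k ∈ Finset.range j,
          (-1 : ℝ) ^ k * ((2 * j).choose (2 * k + 1) : ℝ) *
            v ^ (2 * k + 1) * u ^ (2 * j - (2 * k + 1)))
        * Real.exp (-(x * u + y * v)))
      = ∑ k ∈ Finset.range j,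
          ((-1 : ℝ) ^ k * ((2 * j).choose (2 * k + 1) : ℝ) *
            ((2*k+1).factorial / y ^ (2*k+1+1))) *
            (u ^ (2 * j - (2 * k + 1)) * Real.exp (-(x * u))) := by
    intro u
    have heq : ∀ v : ℝ,
        (∑ k ∈ Finset.range j,
            (-1 : ℝ) ^ k * ((2 * j).choose (2 * k + 1) : ℝ) *
              v ^ (2 * k + 1) * u ^ (2 * j - (2 * k + 1)))
          * Real.exp (-(x * u + y * v))
        = ∑ k ∈ Finset.range j,
            ((-1 : ℝ) ^ k * ((2 * j).choose (2 * k + 1) : ℝ) * u ^ (2 * j - (2 * k + 1))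
              * Real.exp (-(x * u))) * (v ^ (2 * k + 1) * Real.exp (-(y * v))) := by
      intro v
      rw [Finset.sum_mul]
      refine Finset.sum_congr rfl (fun k _ => ?_)
      rw [neg_add, Real.exp_add]
      ring
    simp only [heq]
    rw [integral_finset_sum _ (fun k _ => ((aux_integrable (2*k+1) hy).const_mul _))]
    refine Finset.sum_congr rfl (fun k _ => ?_)
    rw [integral_const_mul, aux_integral (2*k+1) hy]
    ring
  simp only [inner]
  rw [integral_finset_sum _ (fun k _ => ((aux_integrable (2*j-(2*k+1)) hx).const_mul _))]
  calc (∑ k ∈ Finset.range j, ∫ u in Set.Ioi (0:ℝ),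
        ((-1 : ℝ) ^ k * ((2 * j).choose (2 * k + 1) : ℝ) *
          ((2*k+1).factorial / y ^ (2*k+1+1))) *
          (u ^ (2 * j - (2 * k + 1)) * Real.exp (-(x * u))))
      = ∑ k ∈ Finset.range j, (-1:ℝ)^k * ((2*j).choose (2*k+1) : ℝ) *
          ((2*k+1).factorial / y ^ (2*k+1+1)) *
          ((2*j-(2*k+1)).factorial / x ^ (2*j-(2*k+1)+1)) := by
        refine Finset.sum_congr rfl (fun k _ => ?_)
        rw [integral_const_mul, aux_integral (2*j-(2*k+1)) hx]
    _ = ((2 * j).factorial : ℝ) * ((1 / x ^ 2) ^ j - (-(1 / y ^ 2)) ^ j) / (x ^ 2 + y ^ 2) :=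
        aux_sum j hj hx hy
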